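/- If G is a graph with n vertices and minimum degree at least 3, then γ_{2,2}(G) ≤ (6/7)·n. -/

import Mathlib

open SimpleGraph Finset

def IsAbDom {V : Type*} [Fintype V] [DecidableEq V] (G : SimpleGraph V)
    [DecidableRel G.Adj] (a b : ℕ) (S : Finset V) : Prop :=
  (∀ v ∈ S, a ≤ (G.neighborFinset v ∩ S).card) ∧
  (∀ v ∉ S, b ≤ (G.neighborFinset v ∩ S).card)

/-- Greedy (Caro–Wei style) lemma: in any graph `L` we can find an independent set `R`
together with weights `t` such that `∑_{v ∈ R} t v ≥ |s|` and
`∑_{v ∈ R} t v (t v - 1) ≤ ∑_{v ∈ s} deg_s v`. -/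
lemma greedy_indep {V : Type*} [Fintype V] [DecidableEq V] (L : SimpleGraph V)
    [DecidableRel L.Adj] :
    ∀ s : Finset V, ∃ (R : Finset V) (t : V → ℕ),
      R ⊆ s ∧ (∀ u ∈ R, ∀ w ∈ R, ¬ L.Adj u w) ∧
      s.card ≤ ∑ v ∈ R, t v ∧
      ∑ v ∈ R, t v * (t v - 1) ≤ ∑ v ∈ s, ((L.neighborFinset v) ∩ s).card := by
  intro s
  induction s using Finset.strongInductionOn with
  | _ s ih =>
    rcases s.eq_empty_or_nonempty with rfl | hs
    · exact ⟨∅, fun _ => 0, by simp, by simp, by simp, by simp⟩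
    · obtain ⟨v, hv, hmin⟩ :=
        Finset.exists_min_image s (fun u => ((L.neighborFinset u) ∩ s).card) hs
      set X : Finset V := insert v (L.neighborFinset v) with hX
      set d : ℕ := ((L.neighborFinset v) ∩ s).card with hdd
      have hvX : v ∈ X := Finset.mem_insert_self _ _
      have hss : s \ X ⊂ s := by
        refine ⟨Finset.sdiff_subset, fun hsub => ?_⟩
        exact (Finset.mem_sdiff.mp (hsub hv)).2 hvX
      obtain ⟨R', t', hR's, hind, hcard, hsum⟩ := ih _ hss
      have hvR' : v ∉ R' := fun h => (Finset.mem_sdiff.mp (hR's h)).2 hvX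
      have hvnotnbr : v ∉ L.neighborFinset v := by
        simp [SimpleGraph.mem_neighborFinset]
      -- cardinality of s ∩ X
      have hXinter : X ∩ s = insert v ((L.neighborFinset v) ∩ s) :=
        Finset.insert_inter_of_mem hv
      have hXcard : (X ∩ s).card = d + 1 := by
        rw [hXinter, Finset.card_insert_of_notMem (fun h => hvnotnbr (Finset.mem_inter.mp h).1)]
      -- s \ X = s \ (s ∩ X), and the partition of the sum
      refine ⟨insert v R', Function.update t' v (d + 1), ?_, ?_, ?_, ?_⟩
      · intro u hu
        rcases Finset.mem_insert.mp hu with rfl | hu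
        · exact hv
        · exact Finset.sdiff_subset (hR's hu)
      · intro u hu w hw
        have hnb : ∀ x ∈ R', ¬ L.Adj v x := by
          intro x hx hadj
          exact (Finset.mem_sdiff.mp (hR's hx)).2
            (Finset.mem_insert_of_mem ((SimpleGraph.mem_neighborFinset _ _ _).mpr hadj))
        rcases Finset.mem_insert.mp hu with h1 | h1
        · subst h1
          rcases Finset.mem_insert.mp hw with h2 | h2
          · subst h2; exact fun h => L.irrefl h
          · exact hnb w h2
        · rcases Finset.mem_insert.mp hw with h2 | h2
          · subst h2; exact fun h => hnb u h1 h.symm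
          · exact hind u h1 w h2
      · -- card bound
        have h1 : s.card = (s \ X).card + (X ∩ s).card := by
          rw [Finset.inter_comm]
          exact (Finset.card_sdiff_add_card_inter s X).symm
        have h2 : ∑ u ∈ insert v R', Function.update t' v (d + 1) u
            = (d + 1) + ∑ u ∈ R', t' u := by
          rw [Finset.sum_insert hvR', Function.update_self]
          congr 1
          exact Finset.sum_congr rfl fun u hu =>
            Function.update_of_ne (fun h => hvR' (by rw [← h]; exact hu)) _ _
        rw [h2, h1, hXcard]
        omega
      · -- degree sum bound
        have h2 : ∑ u ∈ insert v R', (Function.update t' v (d + 1) u)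
              * ((Function.update t' v (d + 1) u) - 1)
            = (d + 1) * d + ∑ u ∈ R', t' u * (t' u - 1) := by
          rw [Finset.sum_insert hvR', Function.update_self, Nat.add_sub_cancel]
          congr 1
          exact Finset.sum_congr rfl fun u hu => by
            rw [Function.update_of_ne (fun h => hvR' (by rw [← h]; exact hu))]
        rw [h2]
        -- partition ∑_{u∈s} deg_s u over s∩X and s\X
        have hpart : ∑ u ∈ s \ (X ∩ s), ((L.neighborFinset u) ∩ s).card
              + ∑ u ∈ X ∩ s, ((L.neighborFinset u) ∩ s).card
            = ∑ u ∈ s, ((L.neighborFinset u) ∩ s).card :=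
          Finset.sum_sdiff (Finset.inter_subset_right)
        have hsXX : s \ (X ∩ s) = s \ X := by
          rw [Finset.sdiff_inter_self_right]
        have hlow : (d + 1) * d ≤ ∑ u ∈ X ∩ s, ((L.neighborFinset u) ∩ s).card := by
          calc (d + 1) * d = (X ∩ s).card * d := by rw [hXcard]
            _ ≤ ∑ u ∈ X ∩ s, ((L.neighborFinset u) ∩ s).card := by
                rw [← smul_eq_mul]
                exact Finset.card_nsmul_le_sum _ _ _
                  (fun u hu => hmin u (Finset.mem_inter.mp hu).2)
        have hmono : ∑ u ∈ s \ X, ((L.neighborFinset u) ∩ (s \ X)).card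
            ≤ ∑ u ∈ s \ X, ((L.neighborFinset u) ∩ s).card :=
          Finset.sum_le_sum fun u _ => Finset.card_le_card
            (Finset.inter_subset_inter (le_refl _) Finset.sdiff_subset)
        calc (d + 1) * d + ∑ u ∈ R', t' u * (t' u - 1)
            ≤ (d + 1) * d + ∑ u ∈ s \ X, ((L.neighborFinset u) ∩ (s \ X)).card := by
              omega
          _ ≤ ∑ u ∈ X ∩ s, ((L.neighborFinset u) ∩ s).card
              + ∑ u ∈ s \ X, ((L.neighborFinset u) ∩ s).card := by
              have := hmono.trans_eq rfl
              omega
          _ = ∑ u ∈ s, ((L.neighborFinset u) ∩ s).card := by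
              rw [← hpart, hsXX]; omega

theorem stmt1 {V : Type*} [Fintype V] [DecidableEq V] (G : SimpleGraph V) [DecidableRel G.Adj] (hd : 3 ≤ G.minDegree) :
    ∃ S : Finset V, IsAbDom G 2 2 S ∧ (S.card : ℝ) ≤ 6 / 7 * Fintype.card V := by
  classical
  set n := Fintype.card V with hn
  -- choose 3 neighbors of each vertex
  have h3 : ∀ v : V, ∃ B : Finset V, B ⊆ G.neighborFinset v ∧ B.card = 3 := by
    intro v
    obtain ⟨B, hB, hBc⟩ := Finset.exists_subset_card_eq
      (le_trans hd (G.minDegree_le_degree v))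
    exact ⟨B, hB, hBc⟩
  choose A hA hAcard using h3
  -- auxiliary graph
  set L : SimpleGraph V :=
    { Adj := fun u w => u ≠ w ∧ ∃ v, u ∈ A v ∧ w ∈ A v
      symm := ⟨by
        rintro u w ⟨h1, v, h2, h3⟩
        exact ⟨h1.symm, v, h3, h2⟩⟩
      loopless := ⟨by rintro u ⟨h1, -⟩; exact h1 rfl⟩ } with hL
  letI : DecidableRel L.Adj := fun a b => Classical.dec _
  obtain ⟨R, t, -, hind, hcardT, hEsum⟩ := greedy_indep L Finset.univ
  -- bound the total degree of L
  have hdegL : ∀ u : V, (L.neighborFinset u).card ≤ ∑ w : V, (if u ∈ A w then 2 else 0) := by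
    intro u
    have hsub : L.neighborFinset u
        ⊆ Finset.univ.biUnion (fun w => if u ∈ A w then (A w).erase u else ∅) := by
      intro x hx
      rw [SimpleGraph.mem_neighborFinset] at hx
      obtain ⟨hne, v, h1, h2⟩ := hx
      refine Finset.mem_biUnion.mpr ⟨v, Finset.mem_univ _, ?_⟩
      rw [if_pos h1]
      exact Finset.mem_erase.mpr ⟨hne.symm, h2⟩
    calc (L.neighborFinset u).card
        ≤ ∑ w : V, (if u ∈ A w then (A w).erase u else ∅).card :=
          le_trans (Finset.card_le_card hsub) (Finset.card_biUnion_le)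
      _ ≤ ∑ w : V, (if u ∈ A w then 2 else 0) := by
          refine Finset.sum_le_sum fun w _ => ?_
          by_cases h : u ∈ A w
          · rw [if_pos h, if_pos h, Finset.card_erase_of_mem h, hAcard w]
          · rw [if_neg h, if_neg h, Finset.card_empty]
  have hE : ∑ u : V, ((L.neighborFinset u) ∩ Finset.univ).card ≤ 6 * n := by
    simp only [Finset.inter_univ]
    calc ∑ u : V, (L.neighborFinset u).card
        ≤ ∑ u : V, ∑ w : V, (if u ∈ A w then 2 else 0) :=
          Finset.sum_le_sum fun u _ => hdegL u
      _ = ∑ w : V, ∑ u : V, (if u ∈ A w then 2 else 0) := Finset.sum_comm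
      _ = ∑ w : V, 2 * (A w).card := by
          refine Finset.sum_congr rfl fun w _ => ?_
          rw [Finset.sum_ite_mem, Finset.univ_inter, Finset.sum_const, smul_eq_mul, mul_comm]
      _ = 6 * n := by
          simp only [hAcard]
          rw [Finset.sum_const, Finset.card_univ, smul_eq_mul]
          ring
  -- arithmetic: |R| ≥ n / 7
  set k := R.card with hk
  have hTn : n ≤ ∑ v ∈ R, t v := by
    rwa [Finset.card_univ] at hcardT
  have hQ : ∑ v ∈ R, t v * (t v - 1) ≤ 6 * n := le_trans hEsum hE
  have hsq : ∀ m : ℕ, m ^ 2 ≤ m * (m - 1) + m := by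
    intro m
    cases m with
    | zero => simp
    | succ p =>
      rw [Nat.succ_sub_one, pow_two]
      exact (Nat.mul_succ (p + 1) p).le
  have hCS : (∑ v ∈ R, t v) ^ 2 ≤ k * ∑ v ∈ R, (t v) ^ 2 := by
    have := sq_sum_le_card_mul_sum_sq (s := R) (f := fun v => (t v : ℝ))
    have h' : ((∑ v ∈ R, t v : ℕ) : ℝ) ^ 2 ≤ (k : ℝ) * ((∑ v ∈ R, (t v) ^ 2 : ℕ) : ℝ) := by
      push_cast
      exact this
    exact_mod_cast h'
  have hsum2 : ∑ v ∈ R, (t v) ^ 2 ≤ 6 * n + ∑ v ∈ R, t v := by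
    calc ∑ v ∈ R, (t v) ^ 2 ≤ ∑ v ∈ R, (t v * (t v - 1) + t v) :=
          Finset.sum_le_sum fun v _ => hsq (t v)
      _ = (∑ v ∈ R, t v * (t v - 1)) + ∑ v ∈ R, t v := Finset.sum_add_distrib
      _ ≤ 6 * n + ∑ v ∈ R, t v := by omega
  have hmain : n ≤ 7 * k := by
    set T := ∑ v ∈ R, t v with hT
    have key : T ^ 2 ≤ k * (6 * n + T) := le_trans hCS (Nat.mul_le_mul_left _ hsum2)
    rcases Nat.eq_zero_or_pos n with hn0 | hn0
    · omega
    rcases le_or_gt n k with h | h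
    · omega
    · -- k < n : write n = k + a with a ≥ 1
      obtain ⟨a, han⟩ : ∃ a, n = k + a := ⟨n - k, by omega⟩
      have h2 : T * n ≤ k * (6 * n + T) := by
        calc T * n ≤ T * T := Nat.mul_le_mul_left _ hTn
          _ = T ^ 2 := (pow_two T).symm
          _ ≤ k * (6 * n + T) := key
      have h6 : T * a ≤ 6 * (k * n) := by
        have e : T * n = T * k + T * a := by rw [han]; ring
        have e2 : k * (6 * n + T) = 6 * (k * n) + T * k := by ring
        linarith
      have h7 : n * a ≤ 6 * (k * n) := le_trans (Nat.mul_le_mul_right _ hTn) h6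
      have h8 : a * n ≤ (6 * k) * n := by
        have e3 : n * a = a * n := Nat.mul_comm _ _
        have e4 : 6 * (k * n) = (6 * k) * n := by ring
        linarith
      have h9 : a ≤ 6 * k := Nat.le_of_mul_le_mul_right h8 hn0
      omega
  -- build S
  refine ⟨Finset.univ \ R, ?_, ?_⟩
  · have hkey : ∀ x : V, 2 ≤ (G.neighborFinset x ∩ (Finset.univ \ R)).card := by
      intro x
      have hcap : (A x ∩ R).card ≤ 1 := by
        rw [Finset.card_le_one]
        intro u hu w hw
        by_contra hne
        exact hind u (Finset.mem_inter.mp hu).2 w (Finset.mem_inter.mp hw).2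
          ⟨hne, x, (Finset.mem_inter.mp hu).1, (Finset.mem_inter.mp hw).1⟩
      have hsub : A x \ R ⊆ G.neighborFinset x ∩ (Finset.univ \ R) := by
        intro u hu
        rw [Finset.mem_sdiff] at hu
        exact Finset.mem_inter.mpr ⟨hA x hu.1,
          Finset.mem_sdiff.mpr ⟨Finset.mem_univ _, hu.2⟩⟩
      have hc : (A x \ R).card + (A x ∩ R).card = (A x).card :=
        Finset.card_sdiff_add_card_inter _ _
      have := Finset.card_le_card hsub
      rw [hAcard x] at hc
      omega
    exact ⟨fun v _ => hkey v, fun v _ => hkey v⟩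
  · rw [Finset.card_univ_diff]
    have hRle : R.card ≤ n := by
      rw [hn, ← Finset.card_univ]; exact Finset.card_le_card (Finset.subset_univ R)
    rw [Nat.cast_sub hRle]
    have hm' : (n : ℝ) ≤ 7 * (R.card : ℝ) := by
      have := hmain
      rw [hk] at this
      exact_mod_cast this
    have hnn : ((Fintype.card V : ℕ) : ℝ) = (n : ℝ) := by rw [hn]
    linarith
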